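/- In the Coxeter group of type Dₙ, the map sending a canonical reduced word w₀·w' to its suffix w' gives a well-defined partition of the set of fully commutative elements into 2^(n-1) (possibly empty) collections indexed by subsets of {1,…,n-1}, and every such collection is nonempty since every suffix is itself fully commutative. -/

import Mathlib

/-- Letters `i` and `j` (from `{1, …, n}`) are neighbors in the `Dₙ` Dynkin diagram:
`1 – 2 – ⋯ – (n-2)` is a path, and both `n-1` and `n` are adjacent to `n-2`. -/
def dnAdj (n i j : ℕ) : Prop :=
  (i + 1 = j ∧ j ≤ n - 1) ∨ (j + 1 = i ∧ i ≤ n - 1) ∨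
  (i = n ∧ j = n - 2) ∨ (j = n ∧ i = n - 2)

/-- A word `w` is homogeneous (with respect to a neighbor relation `adj`): whenever the same
letter appears in positions `r < s`, there are positions `t, u` with `r < t < u < s` whose
letters are both neighbors of that letter. -/
def Homog {α : Type*} (adj : α → α → Prop) (w : List α) : Prop :=
  ∀ r s : Fin w.length, (r : ℕ) < s → w.get r = w.get s →
    ∃ t u : Fin w.length, (r : ℕ) < t ∧ (t : ℕ) < u ∧ (u : ℕ) < s ∧
      adj (w.get r) (w.get t) ∧ adj (w.get r) (w.get u)

/-- The descending word `[a, a-1, …, b]` (empty if `a < b`). -/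
def desc (a b : ℕ) : List ℕ := (List.range (a + 1 - b)).map (fun t => a - t)

/-- The suffix word `s_{n,j₁} s_{n-1,j₂} s_{n,j₃} ⋯` of type `Dₙ` determined by the indices
`j₁ < j₂ < ⋯ < j_ℓ`; the boolean records whether the next segment starts with `n` (`true`)
or with `n-1` (`false`). -/
def suffixWord (n : ℕ) : Bool → List ℕ → List ℕ
  | _, [] => []
  | b, j :: js => ((if b then n else n - 1) :: desc (n - 2) j) ++ suffixWord n (!b) js

/-- Validity of the indices `j₁ < j₂ < ⋯ < j_ℓ` of a suffix: strictly increasing and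
contained in `{1, …, n-1}`. -/
def ValidSuffixIdx (n : ℕ) (js : List ℕ) : Prop :=
  js.Chain' (· < ·) ∧ ∀ j ∈ js, 1 ≤ j ∧ j ≤ n - 1

/-- The prefix word `s_{1,i₁} s_{2,i₂} ⋯ s_{n-1,i_{n-1}}` where `s_{k,i} = [k, k-1, …, i]`. -/
def prefixWord (n : ℕ) (i : ℕ → ℕ) : List ℕ :=
  (List.range (n - 1)).flatMap (fun k => desc (k + 1) (i (k + 1)))

/-- Validity of the indices of a prefix: `1 ≤ i_k ≤ k + 1` for `1 ≤ k ≤ n-1`. -/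
def ValidPrefixIdx (n : ℕ) (i : ℕ → ℕ) : Prop :=
  ∀ k, 1 ≤ k → k ≤ n - 1 → 1 ≤ i k ∧ i k ≤ k + 1

/-- The collection labeled by a suffix `suf`: all homogeneous canonical words of type `Dₙ`
with suffix `suf`. -/
def collection (n : ℕ) (suf : List ℕ) : Set (List ℕ) :=
  {w | ∃ i, ValidPrefixIdx n i ∧ w = prefixWord n i ++ suf ∧ Homog (dnAdj n) w}

/-- The set of homogeneous canonical words of type `Dₙ`, representing the fully
commutative elements of the Coxeter group of type `Dₙ`. -/
def HomCanonical (n : ℕ) : Set (List ℕ) :=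
  {w | ∃ i js, ValidPrefixIdx n i ∧ ValidSuffixIdx n js ∧
       w = prefixWord n i ++ suffixWord n true js ∧ Homog (dnAdj n) w}

set_option linter.unusedVariables false

-- basic lemmas
lemma desc_length (a b : ℕ) : (desc a b).length = a + 1 - b := by simp [desc]

lemma desc_getElem (a b k : ℕ) (h : k < (desc a b).length) : (desc a b)[k] = a - k := by
  simp [desc]

lemma mem_desc {a b x : ℕ} (h : x ∈ desc a b) : b ≤ x ∧ x ≤ a := by
  simp [desc] at h
  obtain ⟨t, ht, rfl⟩ := h
  omega

lemma suffixWord_cons (n : ℕ) (b : Bool) (j : ℕ) (js : List ℕ) :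
    suffixWord n b (j :: js) = ((if b then n else n - 1) :: desc (n - 2) j) ++ suffixWord n (!b) js := rfl

lemma suffixWord_nil (n : ℕ) (b : Bool) : suffixWord n b [] = [] := rfl

lemma suffixWord_ne_nil (n : ℕ) (b : Bool) (j : ℕ) (js : List ℕ) :
    suffixWord n b (j :: js) ≠ [] := by simp [suffixWord_cons]

lemma suffixWord_length (n : ℕ) (hn : 4 ≤ n) (b : Bool) (j : ℕ) (js : List ℕ) (hj : j ≤ n - 1) :
    (suffixWord n b (j :: js)).length = (n - 1 - j) + 1 + (suffixWord n (!b) js).length := by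
  simp [suffixWord_cons, desc_length]; omega

lemma mem_suffixWord_bound {n : ℕ} (hn : 4 ≤ n) :
    ∀ (js : List ℕ) (b : Bool) (m x : ℕ),
      (∀ j ∈ js, m ≤ j ∧ j ≤ n - 1) → x ∈ suffixWord n b js → m ≤ x ∧ x ≤ n := by
  intro js
  induction js with
  | nil => simp [suffixWord_nil]
  | cons j rest ih =>
    intro b m x hb hx
    rw [suffixWord_cons] at hx
    rcases List.mem_append.1 hx with hx | hx
    · rcases List.mem_cons.1 hx with hx | hx
      · have hj := hb j (by simp)
        rcases Bool.eq_false_or_eq_true b with h | h <;> subst h <;> simp at hx <;> omega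
      · have := mem_desc hx
        have hj := hb j (by simp)
        omega
    · exact ih (!b) m x (fun j' hj' => hb j' (by simp [hj'])) hx

lemma suffixWord_getElem_zero (n : ℕ) (b : Bool) (j : ℕ) (js : List ℕ)
    (h : 0 < (suffixWord n b (j :: js)).length) :
    (suffixWord n b (j :: js))[0] = if b then n else n - 1 := by
  simp only [suffixWord_cons]
  rfl

-- Fact B: any occurrence of a letter ≤ n-2 has an adjacent immediate predecessor
lemma suffixWord_pred_adj {n : ℕ} (hn : 4 ≤ n) :
    ∀ (js : List ℕ) (b : Bool), (∀ j ∈ js, 1 ≤ j ∧ j ≤ n - 1) →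
    ∀ s (hs : s < (suffixWord n b js).length), (suffixWord n b js)[s] ≤ n - 2 →
      1 ≤ s ∧ ∀ h1 : s - 1 < (suffixWord n b js).length,
        dnAdj n ((suffixWord n b js)[s]) ((suffixWord n b js)[s-1]) := by
  intro js
  induction js with
  | nil => intro b _ s hs; simp [suffixWord_nil] at hs
  | cons j rest ih =>
    intro b hb s hs hval
    have hj : 1 ≤ j ∧ j ≤ n - 1 := hb j (by simp)
    set c := if b then n else n - 1 with hc
    have hcval : c = n ∨ c = n - 1 := by rcases Bool.eq_false_or_eq_true b with h | h <;> simp [hc, h]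
    set S : List ℕ := c :: desc (n - 2) j with hS
    set W := suffixWord n (!b) rest with hW
    have hw : suffixWord n b (j :: rest) = S ++ W := suffixWord_cons n b j rest
    have hSlen : S.length = 1 + (n - 1 - j) := by simp [hS, desc_length]; omega
    simp only [hw] at hs hval ⊢
    rw [List.length_append] at hs
    by_cases hcase : s < S.length
    · -- inside first segment
      rw [List.getElem_append_left hcase] at hval
      have hs0 : s ≠ 0 := by
        intro h0
        subst h0
        simp [hS] at hval
        omega
      have hs1 : 1 ≤ s := by omega
      refine ⟨hs1, fun h1 => ?_⟩
      have hsd : s - 1 < (desc (n-2) j).length := by simp [desc_length]; omega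
      have hvs : S[s]'hcase = n - 2 - (s-1) := by
        have : S[s]'hcase = (desc (n-2) j)[s-1]'hsd := by
          simp [hS]
          rw [List.getElem_cons]
          simp [hs0]
        rw [this, desc_getElem]
      have hless : s - 1 < S.length := by omega
      rw [List.getElem_append_left hcase, List.getElem_append_left hless, hvs]
      by_cases hs2 : s = 1
      · -- predecessor is the head c
        have : S[s-1]'hless = c := by simp [hS, hs2]
        rw [this]
        unfold dnAdj
        have hd : s - 1 < (desc (n-2) j).length := hsd
        have : j ≤ n - 2 := by simp [desc_length] at hd; omega
        rcases hcval with h | h <;> subst hs2 <;> omega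
      · -- predecessor is the next letter in desc
        have hsd2 : s - 2 < (desc (n-2) j).length := by simp [desc_length]; omega
        have : S[s-1]'hless = n - 2 - (s - 2) := by
          have h2 : S[s-1]'hless = (desc (n-2) j)[s-2]'hsd2 := by
            simp [hS]
            rw [List.getElem_cons]
            have : ¬ (s - 1 = 0) := by omega
            simp [this, Nat.sub_sub]
          rw [h2, desc_getElem]
        rw [this]
        unfold dnAdj
        have : s - 1 < (desc (n-2) j).length := hsd
        simp [desc_length] at this
        omega
    · -- inside W
      push_neg at hcase
      have hsW : s - S.length < W.length := by omega
      rw [List.getElem_append_right hcase] at hval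
      obtain ⟨h1, h2⟩ := ih (!b) (fun j' hj' => hb j' (by simp [hj'])) (s - S.length) hsW hval
      have hges : 1 ≤ s := by omega
      refine ⟨hges, fun hless => ?_⟩
      have hc1 : S.length ≤ s - 1 := by omega
      rw [List.getElem_append_right hcase, List.getElem_append_right hc1]
      have he : s - 1 - S.length = s - S.length - 1 := by omega
      simp only [he]
      exact h2 (by simp only [← hW]; omega)

-- Fact C: any occurrence of a letter ≥ n-1 at position ≥ 1 is preceded by an n-2 at position ≥ 1
lemma suffixWord_exists_n2 {n : ℕ} (hn : 4 ≤ n) :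
    ∀ (js : List ℕ) (b : Bool), (∀ j ∈ js, 1 ≤ j ∧ j ≤ n - 1) → js.Pairwise (· < ·) →
    ∀ s (hs : s < (suffixWord n b js).length), 1 ≤ s → n - 1 ≤ (suffixWord n b js)[s] →
      ∃ u, 1 ≤ u ∧ u < s ∧ ∃ hu : u < (suffixWord n b js).length, (suffixWord n b js)[u] = n - 2 := by
  intro js
  induction js with
  | nil => intro b _ _ s hs; simp [suffixWord_nil] at hs
  | cons j rest ih =>
    intro b hb hp s hs hs1 hval
    have hj : 1 ≤ j ∧ j ≤ n - 1 := hb j (by simp)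
    set c := if b then n else n - 1 with hc
    set S : List ℕ := c :: desc (n - 2) j with hS
    set W := suffixWord n (!b) rest with hW
    have hw : suffixWord n b (j :: rest) = S ++ W := suffixWord_cons n b j rest
    have hSlen : S.length = 1 + (n - 1 - j) := by simp [hS, desc_length]; omega
    simp only [hw] at hs hval ⊢
    rw [List.length_append] at hs
    by_cases hcase : s < S.length
    · -- impossible: positions 1.. of S have letters ≤ n-2
      exfalso
      rw [List.getElem_append_left hcase] at hval
      have hsd : s - 1 < (desc (n-2) j).length := by simp [desc_length]; omega
      have : S[s]'hcase = n - 2 - (s-1) := by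
        have h2 : S[s]'hcase = (desc (n-2) j)[s-1]'hsd := by
          simp [hS]
          rw [List.getElem_cons]
          have : ¬ (s = 0) := by omega
          simp [this]
        rw [h2, desc_getElem]
      omega
    · push_neg at hcase
      have hsW : s - S.length < W.length := by omega
      rw [List.getElem_append_right hcase] at hval
      -- rest is nonempty
      obtain ⟨j2, rest2⟩ : ∃ j2 rest2, rest = j2 :: rest2 := by
        rcases rest with _ | ⟨j2, rest2⟩
        · exfalso; rw [hW, suffixWord_nil] at hsW; simp at hsW
        · exact ⟨j2, _, rfl⟩
      obtain ⟨rest2, hrest⟩ := rest2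
      have hjj2 : j < j2 := by
        rw [hrest] at hp
        exact (List.pairwise_cons.1 hp).1 j2 (by simp)
      have hdesc_ne : j ≤ n - 2 := by
        have := hb j2 (by simp [hrest]); omega
      have hu1 : (1:ℕ) < S.length := by omega
      have hSu : S[1]'hu1 = n - 2 := by
        have hd0 : 0 < (desc (n-2) j).length := by simp [desc_length]; omega
        have : S[1]'hu1 = (desc (n-2) j)[0]'hd0 := by simp [hS]
        rw [this, desc_getElem]; omega
      by_cases hseq : s - S.length = 0
      · -- the occurrence is the head of W; use n-2 inside S
        refine ⟨1, le_refl _, by omega, by rw [List.length_append]; omega, ?_⟩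
        rw [List.getElem_append_left hu1]
        exact hSu
      · -- recurse into W
        obtain ⟨u, hu1', hu2, huW, huval⟩ :=
          ih (!b) (fun j' hj' => hb j' (by simp [hj'])) (by rw [hrest] at hp ⊢; exact (List.pairwise_cons.1 hp).2)
            (s - S.length) (by simp only [← hW]; omega) (by omega) hval
        refine ⟨S.length + u, by omega, by omega, by rw [List.length_append]; simp only [← hW] at huW ⊢; omega, ?_⟩
        have hge : S.length ≤ S.length + u := by omega
        rw [List.getElem_append_right hge]
        simpa using huval

-- Homog via natural number indices
lemma homog_iff {α : Type*} (adj : α → α → Prop) (w : List α) :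
    Homog adj w ↔ ∀ rv sv (hr : rv < w.length) (hs : sv < w.length), rv < sv → w[rv] = w[sv] →
      ∃ tv uv, ∃ (ht : tv < w.length) (hu : uv < w.length), rv < tv ∧ tv < uv ∧ uv < sv ∧
        adj (w[rv]) (w[tv]) ∧ adj (w[rv]) (w[uv]) := by
  constructor
  · intro H rv sv hr hs hlt heq
    obtain ⟨t, u, h1, h2, h3, h4, h5⟩ := H ⟨rv, hr⟩ ⟨sv, hs⟩ hlt (by simpa [List.get_eq_getElem] using heq)
    exact ⟨t.1, u.1, t.2, u.2, h1, h2, h3, by simpa [List.get_eq_getElem] using h4,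
      by simpa [List.get_eq_getElem] using h5⟩
  · intro H r s hlt heq
    obtain ⟨tv, uv, ht, hu, h1, h2, h3, h4, h5⟩ := H r.1 s.1 r.2 s.2 hlt (by simpa [List.get_eq_getElem] using heq)
    exact ⟨⟨tv, ht⟩, ⟨uv, hu⟩, h1, h2, h3, by simpa [List.get_eq_getElem] using h4,
      by simpa [List.get_eq_getElem] using h5⟩

lemma homog_suffixWord {n : ℕ} (hn : 4 ≤ n) :
    ∀ (js : List ℕ) (b : Bool), (∀ j ∈ js, 1 ≤ j ∧ j ≤ n - 1) → js.Pairwise (· < ·) →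
      Homog (dnAdj n) (suffixWord n b js) := by
  intro js
  induction js with
  | nil => intro b _ _ r; rw [suffixWord_nil] at r; exact r.elim0
  | cons j rest ih =>
    intro b hb hp
    rw [homog_iff]
    intro rv sv hr hs hlt heq
    have hj : 1 ≤ j ∧ j ≤ n - 1 := hb j (by simp)
    set c := if b then n else n - 1 with hc
    have hcval : c = n ∨ c = n - 1 := by rcases Bool.eq_false_or_eq_true b with h | h <;> simp [hc, h]
    set S : List ℕ := c :: desc (n - 2) j with hS
    set W := suffixWord n (!b) rest with hW
    have hw : suffixWord n b (j :: rest) = S ++ W := suffixWord_cons n b j rest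
    have hSlen : S.length = 1 + (n - 1 - j) := by simp [hS, desc_length]; omega
    simp only [hw] at hr hs heq ⊢
    rw [List.length_append] at hr hs
    -- values in S
    have vS : ∀ k (hk : k < S.length), 1 ≤ k → S[k] = n - 2 - (k - 1) := by
      intro k hk hk1
      have hsd : k - 1 < (desc (n-2) j).length := by simp [desc_length]; omega
      have h2 : S[k]'hk = (desc (n-2) j)[k-1]'hsd := by
        simp [hS]
        rw [List.getElem_cons]
        have : ¬ (k = 0) := by omega
        simp [this]
      rw [h2, desc_getElem]
    have vS0 : ∀ hk : (0:ℕ) < S.length, S[0] = c := fun _ => rfl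
    by_cases hcs : sv < S.length
    · -- both in S : impossible
      exfalso
      have hcr : rv < S.length := by omega
      rw [List.getElem_append_left hcr, List.getElem_append_left hcs] at heq
      by_cases h0 : rv = 0
      · subst h0
        rw [vS0 hcr, vS sv hcs (by omega)] at heq
        omega
      · rw [vS rv hcr (by omega), vS sv hcs (by omega)] at heq
        omega
    · push_neg at hcs
      have hsW : sv - S.length < W.length := by omega
      have hWne : rest ≠ [] := by
        intro h; rw [hW, h, suffixWord_nil] at hsW; simp at hsW
      obtain ⟨j2, rest2, hrest⟩ : ∃ j2 rest2, rest = j2 :: rest2 := by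
        rcases rest with _ | ⟨j2, rest2⟩; · exact absurd rfl hWne
        · exact ⟨j2, rest2, rfl⟩
      have hjj2 : j < j2 := by
        rw [hrest] at hp; exact (List.pairwise_cons.1 hp).1 j2 (by simp)
      have hj2n : j2 ≤ n - 1 := (hb j2 (by simp [hrest])).2
      have hjn2 : j ≤ n - 2 := by omega
      have hrestge : ∀ j' ∈ rest, j2 ≤ j' ∧ j' ≤ n - 1 := by
        intro j' hj'
        refine ⟨?_, (hb j' (by simp [hj'])).2⟩
        rw [hrest] at hj' hp
        have hp2 := (List.pairwise_cons.1 hp).2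
        rcases List.mem_cons.1 hj' with h | h
        · omega
        · exact le_of_lt ((List.pairwise_cons.1 hp2).1 j' (by simp [h]))
      have heqW : (S ++ W)[sv] = W[sv - S.length] := List.getElem_append_right hcs
      by_cases hcr : rv < S.length
      · -- cross case
        rw [List.getElem_append_left hcr] at heq
        replace heq := heq.trans heqW
        by_cases h0 : rv = 0
        · -- x = c, occurrence of c inside W
          subst h0
          have hsv1 : 1 ≤ sv - S.length := by
            rcases Nat.eq_zero_or_pos (sv - S.length) with h | h
            · exfalso
              simp only [h] at heq
              have hW0 : W[0]'(by omega) = (if !b then n else n - 1) := by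
                subst hrest
                exact suffixWord_getElem_zero n (!b) j2 rest2 (by simp only [← hW]; omega)
              rw [vS0 hcr, hW0] at heq
              have hcc : c ≠ (if (!b) = true then n else n - 1) := by
                rcases Bool.eq_false_or_eq_true b with hbb | hbb <;> simp [hc, hbb] <;> omega
              exact hcc heq
            · exact h
          obtain ⟨u, hu1, hu2, huW, huval⟩ := suffixWord_exists_n2 hn rest (!b)
            (fun j' hj' => hb j' (by simp [hj'])) ((List.pairwise_cons.1 hp).2)
            (sv - S.length) (by simp only [← hW]; omega) hsv1
            (by simp only [← hW]; rw [← heq, vS0 hcr]; omega)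
          simp only [← hW] at huW huval
          have hS1 : (1:ℕ) < S.length := by omega
          have hSu : S[1]'hS1 = n - 2 := by
            rw [vS 1 hS1 (le_refl _)]; omega
          refine ⟨1, S.length + u, by rw [List.length_append]; omega, by rw [List.length_append]; omega,
            by omega, by omega, by omega, ?_, ?_⟩
          · rw [List.getElem_append_left (show (0:ℕ) < S.length by omega), vS0,
              List.getElem_append_left hS1, hSu]
            unfold dnAdj; omega
          · rw [List.getElem_append_left (show (0:ℕ) < S.length by omega), vS0,
              List.getElem_append_right (show S.length ≤ S.length + u by omega)]
            simp only [Nat.add_sub_cancel_left]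
            rw [huval]
            unfold dnAdj; omega
        · -- x ≤ n - 2, in desc part of S
          have hx : S[rv]'hcr = n - 2 - (rv - 1) := vS rv hcr (by omega)
          set x := S[rv]'hcr with hxd
          have hxn2 : x ≤ n - 2 := by omega
          -- x ∈ W hence j2 ≤ x
          have hxW : j2 ≤ x := by
            have hmem : W[sv - S.length]'hsW ∈ W := List.getElem_mem _
            have := mem_suffixWord_bound hn rest (!b) j2 (W[sv - S.length]'hsW) hrestge hmem
            omega
          have hjx : j < x := by omega
          have hrvlt : rv + 1 < S.length := by omega
          have htv : S[rv+1]'hrvlt = x - 1 := by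
            rw [vS (rv+1) hrvlt (by omega)]; omega
          obtain ⟨hge1, hadj⟩ := suffixWord_pred_adj hn rest (!b)
            (fun j' hj' => hb j' (by simp [hj'])) (sv - S.length) (by simp only [← hW]; omega)
            (by simp only [← hW]; rw [← heq]; exact hxn2)
          have hadj2 := hadj (by simp only [← hW]; omega)
          simp only [← hW] at hadj2
          rw [← heq] at hadj2
          refine ⟨rv + 1, sv - 1, by rw [List.length_append]; omega, by rw [List.length_append]; omega,
            by omega, by omega, by omega, ?_, ?_⟩
          · rw [List.getElem_append_left hcr, List.getElem_append_left hrvlt, htv]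
            unfold dnAdj; omega
          · rw [List.getElem_append_left hcr, List.getElem_append_right (show S.length ≤ sv - 1 by omega)]
            have he : sv - 1 - S.length = sv - S.length - 1 := by omega
            simp only [he]
            exact hadj2
      · -- both in W
        push_neg at hcr
        replace heq := heq.trans heqW
        rw [List.getElem_append_right hcr] at heq
        have hhw := (homog_iff _ _).1 (ih (!b) (fun j' hj' => hb j' (by simp [hj'])) ((List.pairwise_cons.1 hp).2))
        obtain ⟨tv, uv, ht, hu, h1, h2, h3, h4, h5⟩ := hhw (rv - S.length) (sv - S.length)
          (by simp only [← hW]; omega) (by simp only [← hW]; omega) (by omega) (by simp only [← hW]; exact heq)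
        simp only [← hW] at ht hu h4 h5
        refine ⟨S.length + tv, S.length + uv, by rw [List.length_append]; omega, by rw [List.length_append]; omega,
          by omega, by omega, by omega, ?_, ?_⟩
        · rw [List.getElem_append_right hcr, List.getElem_append_right (show S.length ≤ S.length + tv by omega)]
          simpa using h4
        · rw [List.getElem_append_right hcr, List.getElem_append_right (show S.length ≤ S.length + uv by omega)]
          simpa using h5

-- not both j < j'
lemma desc_append_aux {n : ℕ} (hn : 4 ≤ n) {j j' : ℕ} {t t' : List ℕ} {b b' : Bool}
    (hj : 1 ≤ j ∧ j ≤ n - 1) (hj' : 1 ≤ j' ∧ j' ≤ n - 1)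
    (h : desc (n-2) j ++ suffixWord n b t = desc (n-2) j' ++ suffixWord n b' t') :
    ¬ j < j' := by
  intro hlt
  have hlen := congrArg List.length h
  rw [List.length_append, List.length_append, desc_length, desc_length] at hlen
  have hk : n - 1 - j' < (desc (n-2) j).length := by rw [desc_length]; omega
  have hktot : n - 1 - j' < (desc (n-2) j ++ suffixWord n b t).length := by
    rw [List.length_append]; omega
  have h1 : (desc (n-2) j ++ suffixWord n b t)[n-1-j']'hktot = j' - 1 := by
    rw [List.getElem_append_left hk, desc_getElem]; omega
  have hklen' : (desc (n-2) j').length ≤ n - 1 - j' := by rw [desc_length]; omega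
  have hT'len : 0 < (suffixWord n b' t').length := by
    have h2 := hktot
    rw [h, List.length_append, desc_length] at h2
    omega
  rcases t' with _ | ⟨j2', t2'⟩
  · rw [suffixWord_nil] at hT'len; simp at hT'len
  · have hktotR : n - 1 - j' < (desc (n-2) j' ++ suffixWord n b' (j2'::t2')).length := by
      rw [← h]; exact hktot
    have h2 : (desc (n-2) j' ++ suffixWord n b' (j2'::t2'))[n-1-j']'hktotR
        = (if b' then n else n - 1) := by
      rw [List.getElem_append_right hklen']
      have he : n - 1 - j' - (desc (n-2) j').length = 0 := by rw [desc_length]; omega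
      simp only [he]
      exact suffixWord_getElem_zero n b' j2' t2' (by omega)
    have h3 := List.getElem_of_eq h (i := n - 1 - j') hktot
    rw [h1, h2] at h3
    rcases Bool.eq_false_or_eq_true b' with hbb | hbb <;> rw [hbb] at h3 <;> simp at h3 <;> omega

lemma suffixWord_inj {n : ℕ} (hn : 4 ≤ n) :
    ∀ (js js' : List ℕ) (b : Bool), (∀ j ∈ js, 1 ≤ j ∧ j ≤ n - 1) →
      (∀ j ∈ js', 1 ≤ j ∧ j ≤ n - 1) →
      suffixWord n b js = suffixWord n b js' → js = js' := by
  intro js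
  induction js with
  | nil =>
    intro js' b _ hb' h
    rcases js' with _ | ⟨j', t'⟩
    · rfl
    · rw [suffixWord_nil] at h
      exact absurd h.symm (suffixWord_ne_nil n b j' t')
  | cons j t ih =>
    intro js' b hb hb' h
    rcases js' with _ | ⟨j', t'⟩
    · rw [suffixWord_nil] at h
      exact absurd h (suffixWord_ne_nil n b j t)
    · rw [suffixWord_cons, suffixWord_cons] at h
      simp only [List.cons_append, List.cons.injEq] at h
      obtain ⟨-, h⟩ := h
      have hj : 1 ≤ j ∧ j ≤ n - 1 := hb j (by simp)
      have hj' : 1 ≤ j' ∧ j' ≤ n - 1 := hb' j' (by simp)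
      have h1 := desc_append_aux hn hj hj' h
      have h2 := desc_append_aux hn hj' hj h.symm
      have hjj : j = j' := by omega
      subst hjj
      have hT := List.append_cancel_left h
      have := ih t' (!b) (fun x hx => hb x (by simp [hx])) (fun x hx => hb' x (by simp [hx])) hT
      rw [this]

lemma prefixWord_lt {n : ℕ} (hn : 4 ≤ n) (i : ℕ → ℕ) : ∀ x ∈ prefixWord n i, x < n := by
  intro x hx
  rw [prefixWord, List.mem_flatMap] at hx
  obtain ⟨k, hk, hx⟩ := hx
  have h1 := (mem_desc hx).2
  have h2 := List.mem_range.1 hk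
  omega

lemma prefixWord_trivial (n : ℕ) : prefixWord n (fun k => k + 1) = [] := by
  rw [prefixWord]
  apply List.flatMap_eq_nil_iff.2
  intro k hk
  simp [desc]

lemma append_len_le {n : ℕ} (hn : 4 ≤ n) {P P' : List ℕ} {j j' : ℕ} {t t' : List ℕ}
    (hP : ∀ x ∈ P, x < n) (h : P ++ suffixWord n true (j :: t) = P' ++ suffixWord n true (j' :: t')) :
    P.length ≤ P'.length := by
  by_contra hc
  push_neg at hc
  have hid : P'.length < (P' ++ suffixWord n true (j' :: t')).length := by
    rw [List.length_append]
    have : 0 < (suffixWord n true (j' :: t')).length := by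
      rcases Nat.eq_zero_or_pos (suffixWord n true (j' :: t')).length with hz | hz
      · exact absurd (List.length_eq_zero_iff.1 hz) (suffixWord_ne_nil n true j' t')
      · exact hz
    omega
  have h2 : (P' ++ suffixWord n true (j' :: t'))[P'.length]'hid = n := by
    rw [List.getElem_append_right (le_refl _)]
    simp only [Nat.sub_self]
    have := suffixWord_getElem_zero n true j' t' (by have h5 := hid; rw [List.length_append] at h5; omega)
    simpa using this
  have hid2 : P'.length < (P ++ suffixWord n true (j :: t)).length := by rw [h]; exact hid
  have h3 : (P ++ suffixWord n true (j :: t))[P'.length]'hid2 = P[P'.length]'hc := by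
    rw [List.getElem_append_left hc]
  have h4 := List.getElem_of_eq h (i := P'.length) hid2
  rw [h3, h2] at h4
  have := hP _ (h4 ▸ List.getElem_mem hc)
  omega

lemma append_suffix_inj {n : ℕ} (hn : 4 ≤ n) {P P' : List ℕ} {js js' : List ℕ}
    (hP : ∀ x ∈ P, x < n) (hP' : ∀ x ∈ P', x < n)
    (hjs : ∀ j ∈ js, 1 ≤ j ∧ j ≤ n - 1) (hjs' : ∀ j ∈ js', 1 ≤ j ∧ j ≤ n - 1)
    (h : P ++ suffixWord n true js = P' ++ suffixWord n true js') : js = js' := by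
  rcases js with _ | ⟨j, t⟩ <;> rcases js' with _ | ⟨j', t'⟩
  · rfl
  · exfalso
    rw [suffixWord_nil, List.append_nil] at h
    have hmem : n ∈ suffixWord n true (j' :: t') := by
      have hz : 0 < (suffixWord n true (j' :: t')).length := by
        rcases Nat.eq_zero_or_pos (suffixWord n true (j' :: t')).length with hz | hz
        · exact absurd (List.length_eq_zero_iff.1 hz) (suffixWord_ne_nil n true j' t')
        · exact hz
      have h6 := suffixWord_getElem_zero n true j' t' hz
      simp only [if_true] at h6
      exact h6 ▸ List.getElem_mem hz
    have : n ∈ P := by rw [h]; exact List.mem_append_right _ hmem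
    have := hP n this
    omega
  · exfalso
    rw [suffixWord_nil, List.append_nil] at h
    have hmem : n ∈ suffixWord n true (j :: t) := by
      have hz : 0 < (suffixWord n true (j :: t)).length := by
        rcases Nat.eq_zero_or_pos (suffixWord n true (j :: t)).length with hz | hz
        · exact absurd (List.length_eq_zero_iff.1 hz) (suffixWord_ne_nil n true j t)
        · exact hz
      have h6 := suffixWord_getElem_zero n true j t hz
      simp only [if_true] at h6
      exact h6 ▸ List.getElem_mem hz
    have : n ∈ P' := by rw [← h]; exact List.mem_append_right _ hmem
    have := hP' n this
    omega
  · have h1 := append_len_le hn hP h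
    have h2 := append_len_le hn hP' h.symm
    have := (List.append_inj h (by omega)).2
    exact suffixWord_inj hn _ _ true hjs hjs' this


lemma card_valid (n : ℕ) (hn : 4 ≤ n) :
    Nat.card {js : List ℕ // ValidSuffixIdx n js} = 2 ^ (n - 1) := by
  have e : {js : List ℕ // ValidSuffixIdx n js} ≃ {s : Finset ℕ // s ∈ (Finset.Icc 1 (n-1)).powerset} :=
    { toFun := fun p => ⟨p.1.toFinset, by
        rw [Finset.mem_powerset]
        intro x hx
        rw [List.mem_toFinset] at hx
        have := p.2.2 x hx
        rw [Finset.mem_Icc]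
        omega⟩
      invFun := fun p => ⟨p.1.sort (· ≤ ·), by
        constructor
        · refine List.isChain_iff_pairwise.2 ?_
          exact List.sortedLT_iff_pairwise.1 (Finset.sortedLT_sort p.1)
        · intro j hj
          rw [Finset.mem_sort] at hj
          have := Finset.mem_powerset.1 p.2 hj
          rw [Finset.mem_Icc] at this
          omega⟩
      left_inv := fun p => by
        apply Subtype.ext
        have hpw : p.1.Pairwise (· < ·) := List.isChain_iff_pairwise.1 p.2.1
        have hnd : p.1.Nodup := hpw.imp (fun h => ne_of_lt h)
        exact (List.toFinset_sort (· ≤ ·) hnd).2 (hpw.imp (fun h => le_of_lt h))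
      right_inv := fun p => by
        apply Subtype.ext
        exact Finset.sort_toFinset p.1 _ }
  rw [Nat.card_congr e]
  rw [Nat.card_eq_fintype_card, Fintype.card_coe, Finset.card_powerset, Nat.card_Icc]
  congr 1


/-- Sending a canonical reduced word `w₀·w'` to its suffix `w'` partitions the set of
fully commutative elements of type `Dₙ` into `2^(n-1)` collections indexed by subsets of
`{1, …, n-1}` (each element lies in the collection of exactly one suffix, and there are
`2^(n-1)` suffixes), and every collection is nonempty since every suffix is itself fully
commutative. -/
theorem suffix_partition (n : ℕ) (hn : 4 ≤ n) :
    (∀ w ∈ HomCanonical n, ∃! js : List ℕ,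
        ValidSuffixIdx n js ∧ w ∈ collection n (suffixWord n true js)) ∧
    Nat.card {js : List ℕ // ValidSuffixIdx n js} = 2 ^ (n - 1) ∧
    (∀ js : List ℕ, ValidSuffixIdx n js →
        (collection n (suffixWord n true js)).Nonempty) := by
  refine ⟨?_, card_valid n hn, ?_⟩
  · rintro w ⟨i, js, hvi, hvjs, heq, hom⟩
    refine ⟨js, ⟨hvjs, ⟨i, hvi, heq, hom⟩⟩, ?_⟩
    rintro js' ⟨hvjs', hmem⟩
    obtain ⟨i', hvi', heq', -⟩ := hmem
    exact append_suffix_inj hn (prefixWord_lt hn i') (prefixWord_lt hn i) hvjs'.2 hvjs.2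
      (heq'.symm.trans heq)
  · intro js hvjs
    refine ⟨suffixWord n true js, fun k => k + 1, ?_, ?_, ?_⟩
    · intro k h1 h2; constructor <;> simp
    · rw [prefixWord_trivial]; rfl
    · exact homog_suffixWord hn js true hvjs.2 (List.isChain_iff_pairwise.1 hvjs.1)
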